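/- Every entanglement breaking channel Λ(T) = ∑ₓ tr[ρₓT]·F(x) is n-incompatibility breaking for every n: given POVMs A₁,…,Aₙ, the map G(a₁,…,aₙ) = ∑ₓ tr[ρₓA₁(a₁)]⋯tr[ρₓAₙ(aₙ)]·F(x) is a joint POVM for Λ∘A₁,…,Λ∘Aₙ. -/

import Mathlib

open scoped BigOperators ComplexOrder
open Matrix Finset

abbrev Mat (d : ℕ) := Matrix (Fin d) (Fin d) ℂ

/-- A POVM with finite outcome set `Ω`. -/
def IsPOVM {d : ℕ} {Ω : Type} [Fintype Ω] (A : Ω → Mat d) : Prop :=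
  (∀ a, (A a).PosSemidef) ∧ ∑ a, A a = 1

/-- `G` is a joint observable for the family `A` of POVMs. -/
def IsJoint {d n : ℕ} {Ω : Fin n → Type} [∀ i, Fintype (Ω i)] [∀ i, DecidableEq (Ω i)]
    (A : ∀ i, Ω i → Mat d) (G : (∀ i, Ω i) → Mat d) : Prop :=
  IsPOVM G ∧ ∀ (i : Fin n) (a : Ω i), ∑ g ∈ univ.filter (fun g => g i = a), G g = A i a

/-- The POVMs `A i` are compatible (jointly measurable). -/
def Compatible {d n : ℕ} {Ω : Fin n → Type} [∀ i, Fintype (Ω i)] [∀ i, DecidableEq (Ω i)]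
    (A : ∀ i, Ω i → Mat d) : Prop :=
  ∃ G, IsJoint A G

lemma trace_mul_nonneg' {d : ℕ} {P Q : Matrix (Fin d) (Fin d) ℂ}
    (hP : P.PosSemidef) (hQ : Q.PosSemidef) : 0 ≤ (P * Q).trace := by
  obtain ⟨B, rfl⟩ : ∃ B : Matrix (Fin d) (Fin d) ℂ, P = Bᴴ * B := by
    open scoped MatrixOrder in exact CStarAlgebra.nonneg_iff_eq_star_mul_self.mp hP.nonneg
  obtain ⟨C, rfl⟩ : ∃ C : Matrix (Fin d) (Fin d) ℂ, Q = Cᴴ * C := by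
    open scoped MatrixOrder in exact CStarAlgebra.nonneg_iff_eq_star_mul_self.mp hQ.nonneg
  have h : (Bᴴ * B * (Cᴴ * C)).trace = ((B * Cᴴ)ᴴ * (B * Cᴴ)).trace := by
    rw [Matrix.conjTranspose_mul, Matrix.conjTranspose_conjTranspose,
      show Bᴴ * B * (Cᴴ * C) = Bᴴ * (B * Cᴴ * C) by noncomm_ring,
      Matrix.trace_mul_comm,
      show B * Cᴴ * C * Bᴴ = B * Cᴴ * (C * Bᴴ) by noncomm_ring,
      Matrix.trace_mul_comm]
  rw [h, Matrix.trace]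
  refine Finset.sum_nonneg fun j _ => ?_
  rw [Matrix.diag_apply, Matrix.mul_apply]
  exact Finset.sum_nonneg fun k _ => by
    simpa [Matrix.conjTranspose_apply] using star_mul_self_nonneg ((B * Cᴴ) k j)

lemma posSemidef_smul' {d : ℕ} {c : ℂ} (hc : 0 ≤ c) {P : Matrix (Fin d) (Fin d) ℂ}
    (hP : P.PosSemidef) : (c • P).PosSemidef := by
  constructor
  · unfold Matrix.IsHermitian
    rw [Matrix.conjTranspose_smul, hP.1, (IsSelfAdjoint.of_nonneg hc : star c = c)]
  · intro x
    exact (hP.smul hc).2 x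

lemma posSemidef_sum' {d : ℕ} {X : Type} [Fintype X] {P : X → Matrix (Fin d) (Fin d) ℂ}
    (h : ∀ x, (P x).PosSemidef) : (∑ x, P x).PosSemidef := by
  classical
  refine Finset.sum_induction P _ (fun a b ha hb => ha.add hb) Matrix.PosSemidef.zero
    (fun x _ => h x)

lemma sum_filter_prod_eq {n : ℕ} {Ω : Fin n → Type} [∀ i, Fintype (Ω i)]
    [∀ i, DecidableEq (Ω i)] (f : ∀ i, Ω i → ℂ) (h1 : ∀ j, ∑ a, f j a = 1)
    (i : Fin n) (a : Ω i) :
    ∑ g ∈ univ.filter (fun g : ∀ j, Ω j => g i = a), ∏ j, f j (g j) = f i a := by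
  classical
  set s : ∀ j, Ω j → ℂ := fun j b =>
    f j b * (if h : i = j then (if h ▸ a = b then 1 else 0) else 1) with hs
  have key : ∀ g : ∀ j, Ω j, ∏ j, s j (g j)
      = if g i = a then ∏ j, f j (g j) else 0 := by
    intro g
    have : ∏ j, s j (g j)
        = (∏ j, f j (g j)) * ∏ j, (if h : i = j then (if h ▸ a = g j then 1 else 0) else 1) := by
      rw [← Finset.prod_mul_distrib]
    rw [this, Finset.prod_eq_single (f := fun j => if h : i = j then (if h ▸ a = g j then (1 : ℂ) else 0) else 1) i (fun j _ hj => dif_neg (Ne.symm hj))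
      (fun h => absurd (Finset.mem_univ i) h)]
    simp only [dif_pos rfl]
    by_cases hga : g i = a
    · simp [hga]
    · simp only [dite_true]
      rw [if_neg hga, if_neg (fun h : a = g i => hga h.symm), mul_zero]
  rw [Finset.sum_filter]
  calc (∑ g : ∀ j, Ω j, if g i = a then ∏ j, f j (g j) else 0)
      = ∑ g : ∀ j, Ω j, ∏ j, s j (g j) := by simp_rw [key]
    _ = ∏ j, ∑ b, s j b := (Fintype.prod_sum s).symm
    _ = f i a := by
        rw [Finset.prod_eq_single i (fun j _ hj => ?_) (fun h => absurd (Finset.mem_univ i) h)]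
        · simp only [hs, dif_pos rfl, dite_true]
          rw [Finset.sum_eq_single a (fun b _ hb => by
              rw [if_neg (fun h : a = b => hb h.symm), mul_zero])
            (fun h => absurd (Finset.mem_univ a) h)]
          simp
        · simp only [hs, dif_neg (Ne.symm hj), mul_one]; exact h1 j

theorem EB_is_nIBC_aux {d n : ℕ} (X : Type) [Fintype X]
    (ρ : X → Mat d) (hρ : ∀ x, (ρ x).PosSemidef) (hρ1 : ∀ x, (ρ x).trace = 1)
    (F : X → Mat d) (hF : IsPOVM F)
    (Ω : Fin n → Type) [∀ i, Fintype (Ω i)] [∀ i, DecidableEq (Ω i)]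
    (A : ∀ i, Ω i → Mat d) (hA : ∀ i, IsPOVM (A i)) :
    IsJoint (fun i a => ∑ x, (ρ x * A i a).trace • F x)
        (fun g => ∑ x, (∏ i, (ρ x * A i (g i)).trace) • F x) := by
  classical
  have ht0 : ∀ x i a, (0 : ℂ) ≤ (ρ x * A i a).trace :=
    fun x i a => trace_mul_nonneg' (hρ x) ((hA i).1 a)
  have ht1 : ∀ x i, ∑ a, (ρ x * A i a).trace = 1 := by
    intro x i
    calc ∑ a, (ρ x * A i a).trace = (∑ a, ρ x * A i a).trace :=
          (Matrix.trace_sum _ _).symm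
      _ = (ρ x * ∑ a, A i a).trace := by rw [Finset.mul_sum]
      _ = 1 := by rw [(hA i).2, mul_one, hρ1 x]
  refine ⟨⟨fun g => ?_, ?_⟩, fun i a => ?_⟩
  · exact posSemidef_sum' fun x =>
      posSemidef_smul' (Finset.prod_nonneg fun i _ => ht0 x i (g i)) (hF.1 x)
  · rw [Finset.sum_comm]
    calc ∑ x, ∑ g : ∀ j, Ω j, (∏ i, (ρ x * A i (g i)).trace) • F x
        = ∑ x, (∑ g : ∀ j, Ω j, ∏ i, (ρ x * A i (g i)).trace) • F x := by
          simp_rw [Finset.sum_smul]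
      _ = ∑ x, F x := by
          refine Finset.sum_congr rfl fun x _ => ?_
          rw [← Fintype.prod_sum (fun i a => (ρ x * A i a).trace)]
          simp [ht1 x]
      _ = 1 := hF.2
  · rw [Finset.sum_comm]
    calc ∑ x, ∑ g ∈ univ.filter (fun g : ∀ j, Ω j => g i = a),
          (∏ j, (ρ x * A j (g j)).trace) • F x
        = ∑ x, (∑ g ∈ univ.filter (fun g : ∀ j, Ω j => g i = a),
            ∏ j, (ρ x * A j (g j)).trace) • F x := by
          simp_rw [Finset.sum_smul]
      _ = ∑ x, (ρ x * A i a).trace • F x := by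
          refine Finset.sum_congr rfl fun x _ => ?_
          rw [sum_filter_prod_eq (fun j b => (ρ x * A j b).trace) (ht1 x) i a]

/-- Every entanglement breaking channel `Λ(T) = ∑ₓ tr[ρₓT]·F(x)` (Holevo
form) is `n`-incompatibility breaking for every `n`: the map
`G(a₁,…,aₙ) = ∑ₓ tr[ρₓA₁(a₁)]⋯tr[ρₓAₙ(aₙ)]·F(x)` is a joint POVM for `Λ∘A₁,…,Λ∘Aₙ`. -/
theorem EB_is_nIBC {d n : ℕ} (X : Type) [Fintype X]
    (ρ : X → Mat d) (hρ : ∀ x, (ρ x).PosSemidef) (hρ1 : ∀ x, (ρ x).trace = 1)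
    (F : X → Mat d) (hF : IsPOVM F)
    (Ω : Fin n → Type) [∀ i, Fintype (Ω i)] [∀ i, DecidableEq (Ω i)]
    (A : ∀ i, Ω i → Mat d) (hA : ∀ i, IsPOVM (A i)) :
    IsJoint (fun i a => ∑ x, (ρ x * A i a).trace • F x)
        (fun g => ∑ x, (∏ i, (ρ x * A i (g i)).trace) • F x) ∧
      Compatible (fun i a => ∑ x, (ρ x * A i a).trace • F x) := by
  refine ⟨EB_is_nIBC_aux X ρ hρ hρ1 F hF Ω A hA, ⟨_, EB_is_nIBC_aux X ρ hρ hρ1 F hF Ω A hA⟩⟩
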